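/- Let x = i₀ + γ with i₀ ∈ ℤ and γ ∈ (-1/2, 1/2]. Then the symmetric partial sums ∑_{i=-n, i≠i₀}^{n} 1/(x-i) converge as n → ∞ to -2γ ∑_{i=1}^{∞} 1/(i² - γ²). -/

import Mathlib

open Filter Finset

lemma core_id (γ : ℝ) (h1 : -(1:ℝ)/2 < γ) (h2 : γ ≤ 1/2) (M : ℕ) :
    ∑ k ∈ (Finset.Icc (-(M:ℤ)) (M:ℤ)).erase 0, 1/(γ + k)
      = ∑ i ∈ Finset.range M, (-2*γ) * (1 / (((i:ℝ) + 1) ^ 2 - γ ^ 2)) := by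
  induction M with
  | zero => simp
  | succ M ih =>
    have hset : (Finset.Icc (-(M+1:ℕ):ℤ) ((M+1:ℕ):ℤ)).erase 0
        = insert ((M:ℤ)+1) (insert (-((M:ℤ)+1)) ((Finset.Icc (-(M:ℤ)) (M:ℤ)).erase 0)) := by
      ext k
      simp only [Finset.mem_erase, Finset.mem_Icc, Finset.mem_insert]
      push_cast
      omega
    rw [hset, Finset.sum_insert, Finset.sum_insert, ih, Finset.sum_range_succ]
    · have hM : (0:ℝ) ≤ (M:ℝ) := Nat.cast_nonneg M
      have hd1 : γ + ((M:ℝ)+1) ≠ 0 := by nlinarith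
      have hd2 : γ + (-((M:ℝ)+1)) ≠ 0 := by nlinarith
      have hd3 : ((M:ℝ)+1)^2 - γ^2 ≠ 0 := by nlinarith
      have key : 1/(γ + ((M:ℝ)+1)) + 1/(γ + (-((M:ℝ)+1)))
          = (-2*γ) * (1 / (((M:ℝ)+1)^2 - γ^2)) := by
        rw [div_add_div _ _ hd1 hd2, mul_one_div,
          div_eq_div_iff (mul_ne_zero hd1 hd2) hd3]
        ring
      push_cast
      linarith [key]
    · simp only [Finset.mem_erase, Finset.mem_Icc]
      omega
    · simp only [Finset.mem_insert, Finset.mem_erase, Finset.mem_Icc]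
      omega

theorem claim1_first_sum (x : ℝ) (i₀ : ℤ) (γ : ℝ)
    (hx : x = i₀ + γ) (hγ : γ ∈ Set.Ioc (-(1:ℝ)/2) (1/2)) :
    Tendsto (fun n : ℕ => ∑ i ∈ (Finset.Icc (-(n:ℤ)) (n:ℤ)).erase i₀, 1 / (x - i))
      atTop (nhds (-2 * γ * ∑' i : ℕ, 1 / (((i:ℝ) + 1) ^ 2 - γ ^ 2))) := by
  obtain ⟨hγ1, hγ2⟩ := hγ
  have hγ1' : -(1:ℝ)/2 < γ := hγ1
  set a := i₀.natAbs with ha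
  set F : ℕ → ℝ := fun n => ∑ i ∈ (Finset.Icc (-(n:ℤ)) (n:ℤ)).erase i₀, 1 / (x - i) with hF
  set G : ℕ → ℝ := fun M => ∑ i ∈ Finset.range M, (-2*γ) * (1 / (((i:ℝ) + 1) ^ 2 - γ ^ 2))
    with hGdef
  -- positivity of denominators
  have hden : ∀ i : ℕ, (0:ℝ) < ((i:ℝ)+1)^2 - γ^2 := by
    intro i
    have : (0:ℝ) ≤ i := Nat.cast_nonneg i
    nlinarith
  -- summability
  have hsum : Summable (fun i : ℕ => 1 / (((i:ℝ)+1)^2 - γ^2)) := by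
    have h2 : Summable (fun i : ℕ => (4/3 : ℝ) * (1/((i:ℝ)+1)^2)) := by
      apply Summable.mul_left
      have := (_root_.summable_nat_add_iff (f := fun n : ℕ => 1 / (n:ℝ)^2) 1).2
        (Real.summable_one_div_nat_pow.2 one_lt_two)
      simpa using this
    apply Summable.of_nonneg_of_le (fun i => le_of_lt (one_div_pos.2 (hden i))) _ h2
    intro i
    have hi : (0:ℝ) ≤ i := Nat.cast_nonneg i
    have hb : (0:ℝ) < ((i:ℝ)+1)^2 := by positivity
    rw [mul_one_div, div_le_div_iff₀ (hden i) hb]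
    nlinarith
  have hG : Tendsto G atTop
      (nhds (-2 * γ * ∑' i : ℕ, 1 / (((i:ℝ) + 1) ^ 2 - γ ^ 2))) := by
    have := (hsum.hasSum.tendsto_sum_nat).const_mul (-2*γ)
    simpa [hGdef, Finset.mul_sum] using this
  have hGa : Tendsto (fun n : ℕ => G (n - a)) atTop
      (nhds (-2 * γ * ∑' i : ℕ, 1 / (((i:ℝ) + 1) ^ 2 - γ ^ 2))) :=
    hG.comp (tendsto_sub_atTop_nat a)
  -- key identity and bound for n ≥ a
  have key : ∀ n : ℕ, a ≤ n →
      |F n - G (n - a)| ≤ (2*a : ℝ) * (1 / (((n - a : ℕ):ℝ) + 1/2)) := by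
    intro n hn
    set m : ℕ := n - a with hm
    set T : Finset ℤ := (Finset.Icc (i₀-(n:ℤ)) (i₀+(n:ℤ))).erase 0 with hT
    set S : Finset ℤ := (Finset.Icc (-(m:ℤ)) (m:ℤ)).erase 0 with hS
    have hmn : (m:ℤ) = (n:ℤ) - a := by omega
    -- reindex
    have hre : F n = ∑ k ∈ T, 1/(γ + k) := by
      refine Finset.sum_nbij' (fun i => i₀ - i) (fun k => i₀ - k) ?_ ?_ ?_ ?_ ?_
      · intro i hi
        simp only [hT, Finset.mem_erase, Finset.mem_Icc] at hi ⊢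
        omega
      · intro k hk
        simp only [hT, Finset.mem_erase, Finset.mem_Icc] at hk ⊢
        omega
      · intro i _; ring
      · intro k _; ring
      · intro i _
        rw [hx]
        push_cast
        ring_nf
    have hsub : S ⊆ T := by
      intro k hk
      simp only [hS, hT, Finset.mem_erase, Finset.mem_Icc] at hk ⊢
      omega
    have hsplit : F n = (∑ k ∈ T \ S, 1/(γ + (k:ℝ))) + ∑ k ∈ S, 1/(γ + (k:ℝ)) := by
      rw [hre, ← Finset.sum_sdiff hsub]
    have hcore : ∑ k ∈ S, 1/(γ + (k:ℝ)) = G m := core_id γ hγ1' hγ2 m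
    have hFG : F n - G m = ∑ k ∈ T \ S, 1/(γ + (k:ℝ)) := by
      rw [hsplit, hcore]; ring
    -- bound each term
    have hterm : ∀ k ∈ T \ S, |1/(γ + (k:ℝ))| ≤ 1 / ((m:ℝ) + 1/2) := by
      intro k hk
      simp only [Finset.mem_sdiff, hS, hT, Finset.mem_erase, Finset.mem_Icc] at hk
      have hk' : (m:ℤ) + 1 ≤ k ∨ k ≤ -((m:ℤ)+1) := by omega
      have habs : (m:ℝ) + 1/2 ≤ |γ + (k:ℝ)| := by
        rcases hk' with h | h
        · have : ((m:ℝ)) + 1 ≤ (k:ℝ) := by exact_mod_cast h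
          rw [le_abs]
          left; linarith
        · have : (k:ℝ) ≤ -((m:ℝ)+1) := by exact_mod_cast h
          rw [le_abs]
          right; linarith
      have hpos : (0:ℝ) < (m:ℝ) + 1/2 := by positivity
      rw [abs_div, abs_one]
      exact one_div_le_one_div_of_le hpos habs
    have hcard : ((T \ S).card : ℝ) ≤ 2 * a := by
      have h0T : (0:ℤ) ∈ Finset.Icc (i₀-(n:ℤ)) (i₀+(n:ℤ)) := by
        simp only [Finset.mem_Icc]; omega
      have h0S : (0:ℤ) ∈ Finset.Icc (-(m:ℤ)) (m:ℤ) := by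
        simp only [Finset.mem_Icc]; omega
      have hcT : T.card = 2*n := by
        rw [hT, Finset.card_erase_of_mem h0T, Int.card_Icc]
        omega
      have hcS : S.card = 2*m := by
        rw [hS, Finset.card_erase_of_mem h0S, Int.card_Icc]
        omega
      have := Finset.card_sdiff_of_subset hsub
      have hle : (T \ S).card = 2*a := by omega
      rw [hle]; push_cast; ring_nf; rfl
    calc |F n - G m| = |∑ k ∈ T \ S, 1/(γ + (k:ℝ))| := by rw [hFG]
      _ ≤ ∑ k ∈ T \ S, |1/(γ + (k:ℝ))| := Finset.abs_sum_le_sum_abs _ _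
      _ ≤ (T \ S).card * (1 / ((m:ℝ) + 1/2)) := by
          simpa using Finset.sum_le_card_nsmul _ _ _ hterm
      _ ≤ (2*a : ℝ) * (1 / ((m:ℝ) + 1/2)) := by
          have hpos : (0:ℝ) ≤ 1 / ((m:ℝ) + 1/2) := by positivity
          exact mul_le_mul_of_nonneg_right hcard hpos
  -- bound tends to zero
  have hB : Tendsto (fun n : ℕ => (2*a : ℝ) * (1 / (((n - a : ℕ):ℝ) + 1/2))) atTop (nhds 0) := by
    have h1 : Tendsto (fun m : ℕ => ((m:ℝ) + 1/2)) atTop atTop :=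
      tendsto_atTop_add_const_right _ _ tendsto_natCast_atTop_atTop
    have h2 : Tendsto (fun m : ℕ => 1 / ((m:ℝ) + 1/2)) atTop (nhds 0) := by
      simpa [one_div, Pi.inv_def] using h1.inv_tendsto_atTop
    have h3 := (h2.const_mul (2*a : ℝ)).comp (tendsto_sub_atTop_nat a)
    simpa [Function.comp_def] using h3
  have h0 : Tendsto (fun n : ℕ => F n - G (n - a)) atTop (nhds 0) := by
    apply squeeze_zero_norm' _ hB
    filter_upwards [eventually_ge_atTop a] with n hn
    simpa [Real.norm_eq_abs] using key n hn
  have := hGa.add h0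
  rw [add_zero] at this
  have heq : (fun n : ℕ => G (n - a) + (F n - G (n - a))) = F := by
    funext n; ring
  rw [heq] at this
  exact this
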